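/- Let D be a regular 4^m 2^{(n+1)-(p+1)} design with 2^k runs of resolution at least III, represented by direct-summing two-dimensional subspaces U_1, …, U_m of V = (ZMod 2)^k and two-level vectors w_1, …, w_{n+1} ∈ V such that the U_t together with the w_i span V, and whose defining relation K contains at least one nonzero word. Then there exists an index i ∈ {1, …, n+1} such that (a) the delete-one-factor projection D_(i) has minimum aberration of type m among D_(1), …, D_(n+1); (b) w_i lies in the span of U_1, …, U_m together with the vectors w_j for j ≠ i; and (c) the U_t together with {w_j : j ≠ i} span V. In particular, D is obtained from the regular 4^m 2^{n-p} design D_(i), which has 2^k distinct runs, by appending a single two-level column that is a product of columns of D_(i). (This is the key inductive step in the proof of Lemma A.2, establishing that extending minimum-aberration delete-one-factor projections yields a complete set of designs.) -/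
import Mathlib


/-- The defining relation (including the zero word) of a regular `4^m 2^{n-p}` design
represented by subspaces `U t` (four-level factors) and vectors `w i` (two-level factors)
in `V = (ZMod 2)^k`: the set of pairs `(s, u)` with each `u t ∈ U t` and
`∑ i, s i • w i + ∑ t, u t = 0`. -/
def wordSet {k m n : ℕ} (U : Fin m → Submodule (ZMod 2) (Fin k → ZMod 2))
    (w : Fin n → Fin k → ZMod 2) :
    Set ((Fin n → ZMod 2) × (Fin m → (Fin k → ZMod 2))) :=
  {su | (∀ t, su.2 t ∈ U t) ∧ (∑ i, su.1 i • w i) + (∑ t, su.2 t) = 0}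

/-- The length of a word `(s, u)`: the number of indices `i` with `s i = 1` plus the
number of four-level factors `t` with `u t ≠ 0`. -/
def wordLength {k m n : ℕ} (su : (Fin n → ZMod 2) × (Fin m → (Fin k → ZMod 2))) : ℕ :=
  (Finset.univ.filter fun i => su.1 i = 1).card +
    (Finset.univ.filter fun t => su.2 t ≠ 0).card

/-- The type of a word `(s, u)`: the number of four-level factors `t` with `u t ≠ 0`. -/
def wordType {k m n : ℕ} (su : (Fin n → ZMod 2) × (Fin m → (Fin k → ZMod 2))) : ℕ :=
  (Finset.univ.filter fun t => su.2 t ≠ 0).card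

/-- `Acount U w ℓ t` is the number `A_{ℓ,t}` of defining words of length `ℓ` and type `t`. -/
noncomputable def Acount {k m n : ℕ} (U : Fin m → Submodule (ZMod 2) (Fin k → ZMod 2))
    (w : Fin n → Fin k → ZMod 2) (ℓ t : ℕ) : ℕ :=
  Nat.card {su : (Fin n → ZMod 2) × (Fin m → (Fin k → ZMod 2)) //
    su ∈ wordSet U w ∧ su ≠ 0 ∧ wordLength su = ℓ ∧ wordType su = t}

/-- `wlpLexLt A B` says that the word length pattern of type `m` recorded by `A`
(as a function `(length, type) ↦ A_{ℓ,t}`) is lexicographically strictly smaller than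
the one recorded by `B`, where positions are ordered by increasing length and,
within a length, by decreasing type: "less aberration of type m". -/
def wlpLexLt (A B : ℕ → ℕ → ℕ) : Prop :=
  ∃ ℓ t, A ℓ t < B ℓ t ∧
    ∀ ℓ' t', (ℓ' < ℓ ∨ (ℓ' = ℓ ∧ t < t')) → A ℓ' t' = B ℓ' t'

private lemma exists_min_rel {α : Type*} (r : α → α → Prop)
    (htr : ∀ a b c, r a b → r b c → r a c) (hirr : ∀ a, ¬ r a a)
    (s : Finset α) (hne : s.Nonempty) : ∃ a ∈ s, ∀ b ∈ s, ¬ r b a := by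
  classical
  induction s using Finset.induction with
  | empty => exact absurd hne (by simp)
  | @insert a t hat ih =>
    rcases t.eq_empty_or_nonempty with rfl | htne
    · refine ⟨a, by simp, ?_⟩
      intro b hb hba
      rcases Finset.mem_insert.mp hb with rfl | hbt
      · exact hirr _ hba
      · exact absurd hbt (Finset.notMem_empty b)
    · obtain ⟨c, hc, hcmin⟩ := ih htne
      by_cases hac : r a c
      · refine ⟨a, Finset.mem_insert_self a t, ?_⟩
        intro b hb hba
        rcases Finset.mem_insert.mp hb with rfl | hbt
        · exact hirr _ hba
        · exact hcmin b hbt (htr b _ c hba hac)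
      · refine ⟨c, Finset.mem_insert_of_mem hc, ?_⟩
        intro b hb hbc
        rcases Finset.mem_insert.mp hb with rfl | hbt
        · exact hac hbc
        · exact hcmin b hbt hbc

private lemma wlpLexLt_trans {A B C : ℕ → ℕ → ℕ} (h1 : wlpLexLt A B) (h2 : wlpLexLt B C) :
    wlpLexLt A C := by
  obtain ⟨ℓ₁, t₁, hlt₁, hpre₁⟩ := h1
  obtain ⟨ℓ₂, t₂, hlt₂, hpre₂⟩ := h2
  by_cases hc : ℓ₁ < ℓ₂ ∨ (ℓ₁ = ℓ₂ ∧ t₂ < t₁)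
  · refine ⟨ℓ₁, t₁, ?_, ?_⟩
    · rw [← hpre₂ ℓ₁ t₁ hc]; exact hlt₁
    · intro ℓ' t' h
      rw [hpre₁ ℓ' t' h]
      exact hpre₂ ℓ' t' (by omega)
  · by_cases hc2 : ℓ₂ < ℓ₁ ∨ (ℓ₂ = ℓ₁ ∧ t₁ < t₂)
    · refine ⟨ℓ₂, t₂, ?_, ?_⟩
      · rw [hpre₁ ℓ₂ t₂ hc2]; exact hlt₂
      · intro ℓ' t' h
        rw [hpre₁ ℓ' t' (by omega)]
        exact hpre₂ ℓ' t' h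
    · have hℓ : ℓ₁ = ℓ₂ := by omega
      have ht : t₁ = t₂ := by omega
      subst hℓ; subst ht
      exact ⟨ℓ₁, t₁, lt_trans hlt₁ hlt₂, fun ℓ' t' h => (hpre₁ ℓ' t' h).trans (hpre₂ ℓ' t' h)⟩

private lemma wlpLexLt_irrefl (A : ℕ → ℕ → ℕ) : ¬ wlpLexLt A A := by
  rintro ⟨ℓ, t, hlt, -⟩
  exact lt_irrefl _ hlt

private lemma sum_insertNth_smul {k n : ℕ} (w : Fin (n + 1) → Fin k → ZMod 2)
    (i : Fin (n + 1)) (s : Fin n → ZMod 2) :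
    (∑ x : Fin (n + 1), Fin.insertNth (α := fun _ => ZMod 2) i 0 s x • w x)
      = ∑ x : Fin n, s x • w (i.succAbove x) := by
  rw [Fin.sum_univ_succAbove (fun x => Fin.insertNth (α := fun _ => ZMod 2) i 0 s x • w x) i]
  simp

private lemma insertNth_mem_wordSet_iff {k m n : ℕ}
    (U : Fin m → Submodule (ZMod 2) (Fin k → ZMod 2))
    (w : Fin (n + 1) → Fin k → ZMod 2) (i : Fin (n + 1))
    (s : Fin n → ZMod 2) (u : Fin m → (Fin k → ZMod 2)) :
    (i.insertNth 0 s, u) ∈ wordSet U w ↔ (s, u) ∈ wordSet U (w ∘ i.succAbove) := by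
  unfold wordSet
  simp only [Set.mem_setOf_eq]
  show (∀ t, u t ∈ U t) ∧ (∑ x, Fin.insertNth (α := fun _ => ZMod 2) i 0 s x • w x)
      + (∑ t, u t) = 0 ↔
    (∀ t, u t ∈ U t) ∧ (∑ x, s x • (w ∘ i.succAbove) x) + (∑ t, u t) = 0
  rw [sum_insertNth_smul]
  rfl

private lemma wordLength_insertNth {k m n : ℕ} (i : Fin (n + 1))
    (s : Fin n → ZMod 2) (u : Fin m → (Fin k → ZMod 2)) :
    wordLength (i.insertNth 0 s, u) = wordLength (s, u) := by
  unfold wordLength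
  congr 1
  show (Finset.univ.filter fun x => Fin.insertNth (α := fun _ => ZMod 2) i 0 s x = 1).card
      = (Finset.univ.filter fun x => s x = 1).card
  rw [Finset.card_filter, Finset.card_filter,
    Fin.sum_univ_succAbove
      (fun x => if Fin.insertNth (α := fun _ => ZMod 2) i 0 s x = 1 then 1 else 0) i]
  simp [Fin.insertNth_apply_same, Fin.insertNth_apply_succAbove,
    (by decide : ¬ (0 : ZMod 2) = 1)]

private lemma insertNth_pair_eq_zero_iff {k m n : ℕ} (i : Fin (n + 1))
    (s : Fin n → ZMod 2) (u : Fin m → (Fin k → ZMod 2)) :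
    ((i.insertNth 0 s, u) : (Fin (n+1) → ZMod 2) × (Fin m → (Fin k → ZMod 2))) = 0
      ↔ ((s, u) : (Fin n → ZMod 2) × (Fin m → (Fin k → ZMod 2))) = 0 := by
  rw [Prod.mk_eq_zero, Prod.mk_eq_zero]
  constructor
  · rintro ⟨h1, h2⟩
    refine ⟨?_, h2⟩
    funext z
    have := congrFun h1 (i.succAbove z)
    rwa [Fin.insertNth_apply_succAbove] at this
  · rintro ⟨h1, h2⟩
    refine ⟨?_, h2⟩
    rw [h1]
    funext x
    rcases eq_or_ne x i with rfl | hx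
    · rw [Fin.insertNth_apply_same]; rfl
    · obtain ⟨z, rfl⟩ := Fin.exists_succAbove_eq hx
      rw [Fin.insertNth_apply_succAbove]; rfl

private lemma eq_insertNth_of_apply_eq_zero {n : ℕ} (s : Fin (n + 1) → ZMod 2)
    (j : Fin (n + 1)) (h : s j = 0) : s = j.insertNth 0 (s ∘ j.succAbove) := by
  funext x
  rcases eq_or_ne x j with rfl | hx
  · rw [Fin.insertNth_apply_same, h]
  · obtain ⟨z, rfl⟩ := Fin.exists_succAbove_eq hx
    rw [Fin.insertNth_apply_succAbove]; rfl

private lemma Acount_succAbove_le {k m n : ℕ}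
    (U : Fin m → Submodule (ZMod 2) (Fin k → ZMod 2))
    (w : Fin (n + 1) → Fin k → ZMod 2) (i : Fin (n + 1)) (ℓ t : ℕ) :
    Acount U (w ∘ i.succAbove) ℓ t ≤ Acount U w ℓ t := by
  unfold Acount
  apply Nat.card_le_card_of_injective
    (f := fun x => (⟨(i.insertNth 0 x.1.1, x.1.2),
      (insertNth_mem_wordSet_iff U w i x.1.1 x.1.2).2 x.2.1,
      fun h => x.2.2.1 ((insertNth_pair_eq_zero_iff i x.1.1 x.1.2).1 h),
      by rw [wordLength_insertNth]; exact x.2.2.2.1,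
      x.2.2.2.2⟩ :
      {su : (Fin (n+1) → ZMod 2) × (Fin m → (Fin k → ZMod 2)) //
        su ∈ wordSet U w ∧ su ≠ 0 ∧ wordLength su = ℓ ∧ wordType su = t}))
  intro a b hab
  simp only [Subtype.mk.injEq, Prod.mk.injEq] at hab
  have hfst : a.1.1 = b.1.1 := by
    funext z
    have := congrFun hab.1 (i.succAbove z)
    rwa [Fin.insertNth_apply_succAbove, Fin.insertNth_apply_succAbove] at this
  exact Subtype.ext (Prod.ext_iff.mpr ⟨hfst, hab.2⟩)

private lemma Acount_le_of_forall_zero {k m n : ℕ}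
    (U : Fin m → Submodule (ZMod 2) (Fin k → ZMod 2))
    (w : Fin (n + 1) → Fin k → ZMod 2) (j : Fin (n + 1))
    (hz : ∀ su ∈ wordSet U w, su.1 j = 0) (ℓ t : ℕ) :
    Acount U w ℓ t ≤ Acount U (w ∘ j.succAbove) ℓ t := by
  unfold Acount
  have key : ∀ (x : {su : (Fin (n+1) → ZMod 2) × (Fin m → (Fin k → ZMod 2)) //
      su ∈ wordSet U w ∧ su ≠ 0 ∧ wordLength su = ℓ ∧ wordType su = t}),
      x.1.1 = j.insertNth 0 (x.1.1 ∘ j.succAbove) := fun x =>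
    eq_insertNth_of_apply_eq_zero x.1.1 j (hz x.1 x.2.1)
  apply Nat.card_le_card_of_injective
    (f := fun x => (⟨(x.1.1 ∘ j.succAbove, x.1.2),
      (insertNth_mem_wordSet_iff U w j _ x.1.2).1 (by
        have hm := x.2.1
        rw [show x.1 = (x.1.1, x.1.2) from rfl, key x] at hm
        exact hm),
      fun h => x.2.2.1 (by
        have h0 := (insertNth_pair_eq_zero_iff j (x.1.1 ∘ j.succAbove) x.1.2).2 h
        rw [← key x] at h0
        exact h0),
      by rw [← wordLength_insertNth j (x.1.1 ∘ j.succAbove) x.1.2, ← key x]; exact x.2.2.2.1,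
      x.2.2.2.2⟩ :
      {su : (Fin n → ZMod 2) × (Fin m → (Fin k → ZMod 2)) //
        su ∈ wordSet U (w ∘ j.succAbove) ∧ su ≠ 0 ∧ wordLength su = ℓ ∧ wordType su = t}))
  intro a b hab
  simp only [Subtype.mk.injEq, Prod.mk.injEq] at hab
  have hfst : a.1.1 = b.1.1 := by
    rw [key a, key b, hab.1]
  exact Subtype.ext (Prod.ext_iff.mpr ⟨hfst, hab.2⟩)

private lemma mem_span_of_word {k m n : ℕ}
    (U : Fin m → Submodule (ZMod 2) (Fin k → ZMod 2))
    (w : Fin (n + 1) → Fin k → ZMod 2) (j : Fin (n + 1))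
    (su : (Fin (n+1) → ZMod 2) × (Fin m → (Fin k → ZMod 2)))
    (hmem : su ∈ wordSet U w) (hj : su.1 j ≠ 0) :
    w j ∈ (⨆ t, U t) ⊔ Submodule.span (ZMod 2) (w '' {x | x ≠ j}) := by
  obtain ⟨hu, hsum⟩ := hmem
  have hj1 : su.1 j = 1 := by
    revert hj; generalize su.1 j = x; revert x; decide
  rw [Fin.sum_univ_succAbove (fun x => su.1 x • w x) j, hj1, one_smul, add_assoc] at hsum
  have hw : w j = -((∑ x : Fin n, su.1 (j.succAbove x) • w (j.succAbove x)) + ∑ t, su.2 t) :=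
    eq_neg_of_add_eq_zero_left hsum
  rw [hw]
  apply Submodule.neg_mem
  apply Submodule.add_mem
  · apply Submodule.sum_mem
    intro x _
    apply Submodule.smul_mem
    exact Submodule.mem_sup_right
      (Submodule.subset_span ⟨j.succAbove x, Fin.succAbove_ne j x, rfl⟩)
  · apply Submodule.sum_mem
    intro t _
    exact Submodule.mem_sup_left (Submodule.mem_iSup_of_mem t (hu t))

private lemma span_top_of_good {k m n : ℕ}
    (U : Fin m → Submodule (ZMod 2) (Fin k → ZMod 2))
    (w : Fin (n + 1) → Fin k → ZMod 2) (i : Fin (n + 1))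
    (hspan : (⨆ t, U t) ⊔ Submodule.span (ZMod 2) (Set.range w) = ⊤)
    (hgood : w i ∈ (⨆ t, U t) ⊔ Submodule.span (ZMod 2) (w '' {j | j ≠ i})) :
    (⨆ t, U t) ⊔ Submodule.span (ZMod 2) (Set.range (w ∘ i.succAbove)) = ⊤ := by
  have hr : Set.range (w ∘ i.succAbove) = w '' {j | j ≠ i} := by
    rw [Set.range_comp, Fin.range_succAbove]
    congr 1
  rw [hr, eq_top_iff, ← hspan]
  apply sup_le le_sup_left
  rw [Submodule.span_le]
  rintro x ⟨jj, rfl⟩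
  rcases eq_or_ne jj i with rfl | hne
  · exact hgood
  · exact Submodule.mem_sup_right (Submodule.subset_span ⟨jj, hne, rfl⟩)

private lemma forall_eq_zero_of_sum_eq_zero {k m : ℕ}
    (U : Fin m → Submodule (ZMod 2) (Fin k → ZMod 2)) (hUind : iSupIndep U)
    (u : Fin m → Fin k → ZMod 2) (hu : ∀ t, u t ∈ U t) (hsum : ∑ t, u t = 0) :
    u = 0 := by
  funext t0
  have h1 : ∑ x ∈ Finset.univ.erase t0, u x + u t0 = 0 := by
    rw [Finset.sum_erase_add _ _ (Finset.mem_univ t0)]; exact hsum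
  have h3 : u t0 ∈ ⨆ (j) (_ : j ≠ t0), U j := by
    rw [eq_neg_of_add_eq_zero_right h1]
    apply Submodule.neg_mem
    apply Submodule.sum_mem
    intro x hx
    exact Submodule.mem_iSup_of_mem x
      (Submodule.mem_iSup_of_mem (Finset.ne_of_mem_erase hx) (hu x))
  show u t0 = 0
  exact Submodule.disjoint_def.mp (hUind t0) _ (hu t0) h3


private lemma exists_min_wlp {ι : Type*} (F : ι → ℕ → ℕ → ℕ) (s : Finset ι)
    (hne : s.Nonempty) : ∃ a ∈ s, ∀ b ∈ s, ¬ wlpLexLt (F b) (F a) :=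
  exists_min_rel (fun a b => wlpLexLt (F a) (F b))
    (fun _ _ _ hab hbc => wlpLexLt_trans hab hbc) (fun _ => wlpLexLt_irrefl _) s hne

/-- **Key inductive step of Lemma A.2.** For a resolution-≥III regular
`4^m 2^{(n+1)-(p+1)}` design whose defining relation contains a nonzero word, there is an
index `i` such that the delete-one-factor projection `D_(i)` has minimum aberration of
type `m` among all delete-one-factor projections, `w i` lies in the span of the `U t` and
the remaining two-level vectors, and the `U t` together with the remaining two-level
vectors still span `V`: `D` is obtained from the `2^k`-run design `D_(i)` by appending a
single two-level column that is a product of columns of `D_(i)`. -/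
theorem exists_minAberration_deleteOneFactor {k m n : ℕ}
    (U : Fin m → Submodule (ZMod 2) (Fin k → ZMod 2))
    (hU2 : ∀ t, Module.finrank (ZMod 2) (U t) = 2)
    (hUind : iSupIndep U)
    (w : Fin (n + 1) → Fin k → ZMod 2)
    (hspan : (⨆ t, U t) ⊔ Submodule.span (ZMod 2) (Set.range w) = ⊤)
    (hres : ∀ su ∈ wordSet U w, su ≠ 0 → 3 ≤ wordLength su)
    (hword : ∃ su ∈ wordSet U w, su ≠ 0) :
    ∃ i : Fin (n + 1),
      (∀ j : Fin (n + 1),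
        ¬ wlpLexLt (Acount U (w ∘ j.succAbove)) (Acount U (w ∘ i.succAbove))) ∧
      w i ∈ (⨆ t, U t) ⊔ Submodule.span (ZMod 2) (w '' {j | j ≠ i}) ∧
      (⨆ t, U t) ⊔ Submodule.span (ZMod 2) (Set.range (w ∘ i.succAbove)) = ⊤ := by
  classical
  obtain ⟨su0, hsu0mem, hsu0ne⟩ := hword
  have hgood_exists : ∃ j, w j ∈ (⨆ t, U t) ⊔
      Submodule.span (ZMod 2) (w '' {x | x ≠ j}) := by
    by_cases hs : su0.1 = 0
    · exfalso
      have hsum := hsu0mem.2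
      rw [hs] at hsum
      simp only [Pi.zero_apply, zero_smul, Finset.sum_const_zero, zero_add] at hsum
      have hu0 := forall_eq_zero_of_sum_eq_zero U hUind su0.2 hsu0mem.1 hsum
      exact hsu0ne (Prod.ext_iff.mpr ⟨hs, hu0⟩)
    · obtain ⟨j, hj⟩ := Function.ne_iff.mp hs
      exact ⟨j, mem_span_of_word U w j su0 hsu0mem hj⟩
  let S : Finset (Fin (n + 1)) := Finset.univ.filter
    (fun j => w j ∈ (⨆ t, U t) ⊔ Submodule.span (ZMod 2) (w '' {x | x ≠ j}))
  have hSne : S.Nonempty := by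
    obtain ⟨j, hj⟩ := hgood_exists
    exact ⟨j, by simp [S, hj]⟩
  obtain ⟨i, hiS, hmin⟩ := exists_min_wlp (fun a => Acount U (w ∘ a.succAbove)) S hSne
  have higood : w i ∈ (⨆ t, U t) ⊔ Submodule.span (ZMod 2) (w '' {x | x ≠ i}) := by
    simpa [S] using hiS
  refine ⟨i, ?_, higood, span_top_of_good U w i hspan higood⟩
  intro j
  by_cases hj : w j ∈ (⨆ t, U t) ⊔ Submodule.span (ZMod 2) (w '' {x | x ≠ j})
  · exact hmin j (by simp [S, hj])
  · intro hlt
    obtain ⟨ℓ, t, hlt', -⟩ := hlt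
    have h1 := Acount_succAbove_le U w i ℓ t
    have h2 := Acount_le_of_forall_zero U w j (fun su hsu => by
      by_contra h0
      exact hj (mem_span_of_word U w j su hsu h0)) ℓ t
    omega
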